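/- Let s ≥ 1 and Z ∈ ℂ^{s×s}. For δ > 0 set M_ℓ(δ) = sup { ‖W^ℓ‖ : m ≥ 1, W ∈ ℂ^{sm×sm}, ‖W − ⊕^m Z‖ < δ }, where ‖·‖ is the operator norm. Then lim_{δ→0⁺} limsup_{ℓ→∞} M_ℓ(δ)^{1/ℓ} = lim_{δ→0⁺} liminf_{ℓ→∞} M_ℓ(δ)^{1/ℓ} = r_spec(Z), the spectral radius of Z. (Both outer limits exist since M_ℓ(δ) is nondecreasing in δ; moreover liminf_{ℓ→∞} M_ℓ(δ)^{1/ℓ} ≥ r_spec(Z) for every δ > 0, and for every ε > 0 there is δ > 0 with limsup_{ℓ→∞} M_ℓ(δ)^{1/ℓ} ≤ r_spec(Z) + ε.) -/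

import Mathlib

open Matrix

/-- The operator norm of a complex matrix with respect to the standard Euclidean
norms. -/
noncomputable def cOpNorm {n m : ℕ} (S : Matrix (Fin n) (Fin m) ℂ) : ℝ :=
  ‖LinearMap.toContinuousLinearMap (Matrix.toEuclideanLin S)‖

/-- The block-diagonal matrix with `k` diagonal blocks equal to `A` (each of size `p`). -/
def repDiag {α : Type*} [Zero α] {p : ℕ} (k : ℕ) (A : Matrix (Fin p) (Fin p) α) :
    Matrix (Fin (k * p)) (Fin (k * p)) α :=
  Matrix.of fun a b =>
    if ((finProdFinEquiv.symm a : Fin k × Fin p)).1 =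
        ((finProdFinEquiv.symm b : Fin k × Fin p)).1 then
      A ((finProdFinEquiv.symm a : Fin k × Fin p)).2
        ((finProdFinEquiv.symm b : Fin k × Fin p)).2
    else 0

/-- The spectral radius of a complex matrix: the maximum of the absolute values of its
eigenvalues. -/
noncomputable def specRad {s : ℕ} (Z : Matrix (Fin s) (Fin s) ℂ) : ℝ :=
  sSup ((fun z => ‖z‖) '' spectrum ℂ Z)

/-- `M_ℓ(δ) = sup {‖W^ℓ‖ : m ≥ 1, W ∈ ℂ^{sm×sm}, ‖W − ⊕^m Z‖ < δ}`. -/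
noncomputable def Mval {s : ℕ} (Z : Matrix (Fin s) (Fin s) ℂ) (ℓ : ℕ) (δ : ℝ) : ℝ :=
  sSup {c : ℝ | ∃ (m : ℕ) (W : Matrix (Fin (m * s)) (Fin (m * s)) ℂ),
    0 < m ∧ cOpNorm (W - repDiag m Z) < δ ∧ c = cOpNorm (W ^ ℓ)}

section Aux

open Finset Filter
open scoped Matrix.Norms.L2Operator ENNReal Topology

lemma cOpNorm_eq_norm {n m : ℕ} (S : Matrix (Fin n) (Fin m) ℂ) : cOpNorm S = ‖S‖ := rfl

variable {p k : ℕ}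

/-! ### Algebraic properties of `repDiag` -/

private def blkEquiv (k p : ℕ) : Fin (k * p) ≃ Fin p × Fin k :=
  finProdFinEquiv.symm.trans (Equiv.prodComm _ _)

lemma repDiag_eq {α : Type*} [CommRing α] (A : Matrix (Fin p) (Fin p) α) :
    repDiag k A =
      (Matrix.blockDiagonal fun _ : Fin k => A).submatrix (blkEquiv k p) (blkEquiv k p) := by
  ext a b
  simp only [repDiag, Matrix.of_apply, Matrix.submatrix_apply, Matrix.blockDiagonal_apply,
    blkEquiv, Equiv.trans_apply, Equiv.prodComm_apply, Prod.fst_swap, Prod.snd_swap]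

lemma repDiag_one {α : Type*} [CommRing α] : repDiag k (1 : Matrix (Fin p) (Fin p) α) = 1 := by
  rw [repDiag_eq]
  have h1 : (fun _ : Fin k => (1 : Matrix (Fin p) (Fin p) α)) = 1 := rfl
  rw [h1, Matrix.blockDiagonal_one]
  exact Matrix.submatrix_one_equiv (blkEquiv k p)

lemma repDiag_mul {α : Type*} [CommRing α] (A B : Matrix (Fin p) (Fin p) α) :
    repDiag k A * repDiag k B = repDiag k (A * B) := by
  rw [repDiag_eq, repDiag_eq, repDiag_eq, Matrix.submatrix_mul_equiv, Matrix.blockDiagonal_mul]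

lemma repDiag_pow {α : Type*} [CommRing α] (A : Matrix (Fin p) (Fin p) α) (n : ℕ) :
    (repDiag k A) ^ n = repDiag k (A ^ n) := by
  induction n with
  | zero => simpa using (repDiag_one (α := α) (k := k) (p := p)).symm
  | succ n ih => rw [pow_succ, pow_succ, ih, repDiag_mul]

lemma repDiag_sub {α : Type*} [CommRing α] (A B : Matrix (Fin p) (Fin p) α) :
    repDiag k A - repDiag k B = repDiag k (A - B) := by
  ext a b
  by_cases h : ((finProdFinEquiv.symm a : Fin k × Fin p)).1 =
      ((finProdFinEquiv.symm b : Fin k × Fin p)).1 <;>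
    simp only [repDiag, Matrix.sub_apply, Matrix.of_apply, h, if_true, if_false, sub_zero,
      sub_self]

/-! ### The operator norm of `repDiag` -/

private def blk (x : EuclideanSpace ℂ (Fin (k * p))) (c : Fin k) : EuclideanSpace ℂ (Fin p) :=
  WithLp.toLp 2 fun j => x (finProdFinEquiv (c, j))

private def emb (c0 : Fin k) (v : EuclideanSpace ℂ (Fin p)) : EuclideanSpace ℂ (Fin (k * p)) :=
  WithLp.toLp 2 fun a => if (finProdFinEquiv.symm a : Fin k × Fin p).1 = c0 then
    v (finProdFinEquiv.symm a : Fin k × Fin p).2 else 0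

lemma blk_emb (c0 c : Fin k) (v : EuclideanSpace ℂ (Fin p)) :
    blk (emb c0 v) c = if c = c0 then v else 0 := by
  ext j
  show (if (finProdFinEquiv.symm (finProdFinEquiv (c, j)) : Fin k × Fin p).1 = c0 then
      v (finProdFinEquiv.symm (finProdFinEquiv (c, j)) : Fin k × Fin p).2 else 0) =
      (if c = c0 then v else 0) j
  rw [Equiv.symm_apply_apply]
  by_cases h : c = c0 <;> simp [h]

lemma toEuclideanLin_repDiag_apply (A : Matrix (Fin p) (Fin p) ℂ)
    (x : EuclideanSpace ℂ (Fin (k * p))) (c : Fin k) (i : Fin p) :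
    toEuclideanLin (repDiag k A) x (finProdFinEquiv (c, i)) =
      toEuclideanLin A (blk x c) i := by
  have h1 : toEuclideanLin (repDiag k A) x (finProdFinEquiv (c, i)) =
      ∑ b, repDiag k A (finProdFinEquiv (c, i)) b * x b := rfl
  have h2 : toEuclideanLin A (blk x c) i = ∑ j, A i j * x (finProdFinEquiv (c, j)) := rfl
  rw [h1, h2, ← Equiv.sum_comp finProdFinEquiv
    (fun b => repDiag k A (finProdFinEquiv (c, i)) b * x b), Fintype.sum_prod_type]
  simp only [repDiag, Matrix.of_apply, Equiv.symm_apply_apply, ite_mul, zero_mul]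
  rw [Finset.sum_comm]
  simp

lemma euclid_norm_sq {n : ℕ} (v : EuclideanSpace ℂ (Fin n)) : ‖v‖ ^ 2 = ∑ i, ‖v i‖ ^ 2 := by
  rw [EuclideanSpace.norm_eq, Real.sq_sqrt (by positivity)]

lemma norm_toEuclideanLin_le (A : Matrix (Fin p) (Fin p) ℂ) (v : EuclideanSpace ℂ (Fin p)) :
    ‖toEuclideanLin A v‖ ≤ ‖A‖ * ‖v‖ :=
  A.l2_opNorm_mulVec v

lemma sq_norm_repDiag_apply (A : Matrix (Fin p) (Fin p) ℂ) (x : EuclideanSpace ℂ (Fin (k * p))) :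
    ‖toEuclideanLin (repDiag k A) x‖ ^ 2 = ∑ c : Fin k, ‖toEuclideanLin A (blk x c)‖ ^ 2 := by
  rw [euclid_norm_sq, ← Equiv.sum_comp finProdFinEquiv
    (fun b => ‖toEuclideanLin (repDiag k A) x b‖ ^ 2), Fintype.sum_prod_type]
  refine Finset.sum_congr rfl fun c _ => ?_
  rw [euclid_norm_sq]
  exact Finset.sum_congr rfl fun i _ => by rw [toEuclideanLin_repDiag_apply]

lemma sq_norm_blocks (x : EuclideanSpace ℂ (Fin (k * p))) :
    ‖x‖ ^ 2 = ∑ c : Fin k, ‖blk x c‖ ^ 2 := by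
  rw [euclid_norm_sq, ← Equiv.sum_comp finProdFinEquiv (fun b => ‖x b‖ ^ 2),
    Fintype.sum_prod_type]
  exact Finset.sum_congr rfl fun c _ => (euclid_norm_sq (blk x c)).symm

lemma norm_repDiag (hk : 0 < k) (A : Matrix (Fin p) (Fin p) ℂ) : ‖repDiag k A‖ = ‖A‖ := by
  refine le_antisymm ?_ ?_
  · rw [Matrix.l2_opNorm_def]
    refine ContinuousLinearMap.opNorm_le_bound _ (norm_nonneg A) fun x => ?_
    show ‖toEuclideanLin (repDiag k A) x‖ ≤ ‖A‖ * ‖x‖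
    have hsq : ‖toEuclideanLin (repDiag k A) x‖ ^ 2 ≤ (‖A‖ * ‖x‖) ^ 2 := by
      rw [sq_norm_repDiag_apply, mul_pow, sq_norm_blocks (k := k) (p := p) x, Finset.mul_sum]
      refine Finset.sum_le_sum fun c _ => ?_
      rw [← mul_pow]
      exact pow_le_pow_left₀ (norm_nonneg _) (norm_toEuclideanLin_le A _) 2
    exact le_of_pow_le_pow_left₀ two_ne_zero (by positivity) hsq
  · rw [A.l2_opNorm_def]
    refine ContinuousLinearMap.opNorm_le_bound _ (norm_nonneg _) fun v => ?_
    show ‖toEuclideanLin A v‖ ≤ ‖repDiag k A‖ * ‖v‖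
    set c0 : Fin k := ⟨0, hk⟩
    have hxv : ‖emb c0 v‖ ^ 2 = ‖v‖ ^ 2 := by
      rw [sq_norm_blocks (k := k) (p := p)]
      simp [blk_emb, apply_ite (fun w : EuclideanSpace ℂ (Fin p) => ‖w‖ ^ 2),
        Finset.sum_ite_eq']
    have hLx : ‖toEuclideanLin (repDiag k A) (emb c0 v)‖ ^ 2 = ‖toEuclideanLin A v‖ ^ 2 := by
      rw [sq_norm_repDiag_apply]
      simp [blk_emb, apply_ite (fun w => ‖toEuclideanLin A w‖ ^ 2), Finset.sum_ite_eq']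
    have hle : ‖toEuclideanLin (repDiag k A) (emb c0 v)‖ ≤ ‖repDiag k A‖ * ‖emb c0 v‖ :=
      (repDiag k A).l2_opNorm_mulVec (emb c0 v)
    have hxeq : ‖emb c0 v‖ = ‖v‖ := by
      have := congrArg Real.sqrt hxv
      rwa [Real.sqrt_sq (norm_nonneg _), Real.sqrt_sq (norm_nonneg _)] at this
    have hLeq : ‖toEuclideanLin (repDiag k A) (emb c0 v)‖ = ‖toEuclideanLin A v‖ := by
      have := congrArg Real.sqrt hLx
      rwa [Real.sqrt_sq (norm_nonneg _), Real.sqrt_sq (norm_nonneg _)] at this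
    rw [← hLeq, ← hxeq]
    exact hle

/-! ### Gelfand formula and the spectral radius -/

variable {s : ℕ}

lemma exists_spec_max (hs : 0 < s) (Z : Matrix (Fin s) (Fin s) ℂ) :
    ∃ k₀ ∈ spectrum ℂ Z, (∀ k ∈ spectrum ℂ Z, ‖k‖ ≤ ‖k₀‖) ∧ specRad Z = ‖k₀‖ ∧
      spectralRadius ℂ Z = (‖k₀‖₊ : ℝ≥0∞) := by
  haveI : Nonempty (Fin s) := ⟨⟨0, hs⟩⟩
  have hne : (spectrum ℂ Z).Nonempty := spectrum.nonempty Z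
  have hcpt : IsCompact (spectrum ℂ Z) := spectrum.isCompact Z
  obtain ⟨k₀, hk₀, hmax'⟩ := hcpt.exists_isMaxOn hne (continuous_norm.continuousOn)
  have hmax : ∀ k ∈ spectrum ℂ Z, ‖k‖ ≤ ‖k₀‖ := fun k hk => hmax' hk
  refine ⟨k₀, hk₀, hmax, ?_, ?_⟩
  · refine le_antisymm (csSup_le (hne.image _) ?_) (le_csSup ⟨‖k₀‖, ?_⟩ ⟨k₀, hk₀, rfl⟩)
    · rintro c ⟨k, hk, rfl⟩; exact hmax k hk
    · rintro c ⟨k, hk, rfl⟩; exact hmax k hk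
  · refine le_antisymm ?_ ?_
    · refine iSup₂_le fun k hk => ?_
      exact_mod_cast ENNReal.coe_le_coe.mpr (by exact_mod_cast hmax k hk)
    · exact le_iSup₂ (f := fun k (_ : k ∈ spectrum ℂ Z) => (‖k‖₊ : ℝ≥0∞)) k₀ hk₀

lemma specRad_nonneg (hs : 0 < s) (Z : Matrix (Fin s) (Fin s) ℂ) : 0 ≤ specRad Z := by
  obtain ⟨k₀, _, _, h, _⟩ := exists_spec_max hs Z
  rw [h]; exact norm_nonneg _

lemma tendsto_norm_pow_rpow (hs : 0 < s) (Z : Matrix (Fin s) (Fin s) ℂ) :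
    Tendsto (fun ℓ : ℕ => ‖Z ^ ℓ‖ ^ (1 / (ℓ : ℝ))) atTop (𝓝 (specRad Z)) := by
  haveI : Nonempty (Fin s) := ⟨⟨0, hs⟩⟩
  obtain ⟨k₀, _, _, hρ, hR⟩ := exists_spec_max hs Z
  have h := spectrum.pow_nnnorm_pow_one_div_tendsto_nhds_spectralRadius Z
  have hne : spectralRadius ℂ Z ≠ ∞ := by rw [hR]; exact ENNReal.coe_ne_top
  have h2 := (ENNReal.tendsto_toReal hne).comp h
  have heq : (fun ℓ : ℕ => (((‖Z ^ ℓ‖₊ : ℝ≥0∞) ^ (1 / (ℓ : ℝ))).toReal)) =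
      fun ℓ : ℕ => ‖Z ^ ℓ‖ ^ (1 / (ℓ : ℝ)) := by
    funext ℓ
    rw [← ENNReal.toReal_rpow, ENNReal.coe_toReal, coe_nnnorm]
  rw [Function.comp_def, heq] at h2
  have h3 : (spectralRadius ℂ Z).toReal = specRad Z := by
    rw [hR, ENNReal.coe_toReal, coe_nnnorm, hρ]
  rwa [h3] at h2

/-! ### Perturbation bound for powers -/

lemma norm_pow_sub_pow_le {R : Type*} [NormedRing R] [NormOneClass R] (x y : R) {b : ℝ}
    (hx : ‖x‖ ≤ b) (hy : ‖y‖ ≤ b) (hb : 1 ≤ b) (n : ℕ) :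
    ‖x ^ n - y ^ n‖ ≤ n * b ^ n * ‖x - y‖ := by
  induction n with
  | zero => simp
  | succ n ih =>
    have hb0 : (0:ℝ) ≤ b := le_trans zero_le_one hb
    have key : x ^ (n + 1) - y ^ (n + 1) = x ^ n * (x - y) + (x ^ n - y ^ n) * y := by
      simp only [mul_sub, sub_mul, pow_succ]
      abel
    rw [key]
    have h1 : ‖x ^ n * (x - y)‖ ≤ b ^ n * ‖x - y‖ := by
      refine le_trans (norm_mul_le _ _) (mul_le_mul_of_nonneg_right ?_ (norm_nonneg _))
      exact le_trans (norm_pow_le x n) (pow_le_pow_left₀ (norm_nonneg x) hx n)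
    have h2 : ‖(x ^ n - y ^ n) * y‖ ≤ (n * b ^ n * ‖x - y‖) * b := by
      refine le_trans (norm_mul_le _ _) ?_
      exact mul_le_mul ih hy (norm_nonneg _) (by positivity)
    refine le_trans (norm_add_le _ _) (le_trans (add_le_add h1 h2) ?_)
    have hbn : b ^ n ≤ b ^ (n + 1) := pow_le_pow_right₀ hb (Nat.le_succ n)
    have e1 : (n * b ^ n * ‖x - y‖) * b = n * b ^ (n + 1) * ‖x - y‖ := by ring
    rw [e1]
    have : b ^ n * ‖x - y‖ ≤ b ^ (n + 1) * ‖x - y‖ :=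
      mul_le_mul_of_nonneg_right hbn (norm_nonneg _)
    push_cast
    nlinarith [norm_nonneg (x - y), pow_nonneg hb0 (n + 1)]

/-! ### Bounds on `Mval` -/

lemma Mset_bddAbove (hs : 0 < s) (Z : Matrix (Fin s) (Fin s) ℂ) (ℓ : ℕ) {δ : ℝ} (hδ : 0 < δ) :
    ∀ c ∈ {c : ℝ | ∃ (m : ℕ) (W : Matrix (Fin (m * s)) (Fin (m * s)) ℂ),
      0 < m ∧ cOpNorm (W - repDiag m Z) < δ ∧ c = cOpNorm (W ^ ℓ)},
      c ≤ max 1 ((‖Z‖ + δ) ^ ℓ) := by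
  rintro c ⟨m, W, hm, hW, rfl⟩
  haveI : Nonempty (Fin (m * s)) := ⟨⟨0, Nat.mul_pos hm hs⟩⟩
  rw [cOpNorm_eq_norm] at hW ⊢
  have hWle : ‖W‖ ≤ ‖Z‖ + δ := by
    calc ‖W‖ = ‖(W - repDiag m Z) + repDiag m Z‖ := by rw [sub_add_cancel]
    _ ≤ ‖W - repDiag m Z‖ + ‖repDiag m Z‖ := norm_add_le _ _
    _ ≤ δ + ‖Z‖ := add_le_add hW.le (norm_repDiag hm Z).le
    _ = ‖Z‖ + δ := add_comm _ _
  calc ‖W ^ ℓ‖ ≤ ‖W‖ ^ ℓ := norm_pow_le W ℓ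
  _ ≤ (‖Z‖ + δ) ^ ℓ := pow_le_pow_left₀ (norm_nonneg W) hWle ℓ
  _ ≤ max 1 ((‖Z‖ + δ) ^ ℓ) := le_max_right _ _

lemma norm_pow_le_Mval (hs : 0 < s) (Z : Matrix (Fin s) (Fin s) ℂ) (ℓ : ℕ) {δ : ℝ}
    (hδ : 0 < δ) : ‖Z ^ ℓ‖ ≤ Mval Z ℓ δ := by
  have hmem : ‖Z ^ ℓ‖ ∈ {c : ℝ | ∃ (m : ℕ) (W : Matrix (Fin (m * s)) (Fin (m * s)) ℂ),
      0 < m ∧ cOpNorm (W - repDiag m Z) < δ ∧ c = cOpNorm (W ^ ℓ)} := by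
    refine ⟨1, repDiag 1 Z, one_pos, ?_, ?_⟩
    · rw [cOpNorm_eq_norm, sub_self, norm_zero]; exact hδ
    · rw [cOpNorm_eq_norm, repDiag_pow, norm_repDiag one_pos]
  exact le_csSup ⟨max 1 ((‖Z‖ + δ) ^ ℓ), Mset_bddAbove hs Z ℓ hδ⟩ hmem

lemma Mval_nonneg (hs : 0 < s) (Z : Matrix (Fin s) (Fin s) ℂ) (ℓ : ℕ) {δ : ℝ} (hδ : 0 < δ) :
    0 ≤ Mval Z ℓ δ :=
  le_trans (norm_nonneg _) (norm_pow_le_Mval hs Z ℓ hδ)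

end Aux
-- continuation fragment, tested with t6 prepended
section Key
open Finset Filter
open scoped Matrix.Norms.L2Operator ENNReal Topology

variable {s : ℕ}

set_option maxHeartbeats 1000000 in
lemma Mval_upper (hs : 0 < s) (Z : Matrix (Fin s) (Fin s) ℂ) {ε : ℝ} (hε : 0 < ε) :
    ∃ δ₀ > 0, ∃ C ≥ (1:ℝ), ∀ δ : ℝ, 0 < δ → δ ≤ δ₀ → ∀ ℓ : ℕ, 1 ≤ ℓ →
      Mval Z ℓ δ ≤ C * (specRad Z + ε) ^ ℓ := by
  have hρ0 : 0 ≤ specRad Z := specRad_nonneg hs Z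
  set ρ := specRad Z with hρdef
  set a := ρ + ε with ha
  have ha0 : 0 < a := by positivity
  have hev : ∀ᶠ ℓ : ℕ in atTop, ‖Z ^ ℓ‖ ^ (1 / (ℓ : ℝ)) < a :=
    (tendsto_norm_pow_rpow hs Z).eventually_lt_const (by simp [ha]; linarith)
  obtain ⟨N, hNlt, hN1⟩ := (hev.and (eventually_ge_atTop 1)).exists
  have hNne : (N : ℝ) ≠ 0 := Nat.cast_ne_zero.mpr (by omega)
  have hZN : ‖Z ^ N‖ < a ^ N := by
    have hx0 : (0:ℝ) ≤ ‖Z ^ N‖ := norm_nonneg _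
    have hxeq : ‖Z ^ N‖ = (‖Z ^ N‖ ^ (1 / (N : ℝ))) ^ (N : ℕ) := by
      rw [← Real.rpow_natCast (‖Z ^ N‖ ^ (1 / (N : ℝ))) N, ← Real.rpow_mul hx0,
        one_div, inv_mul_cancel₀ hNne, Real.rpow_one]
    rw [hxeq]
    exact pow_lt_pow_left₀ hNlt (Real.rpow_nonneg hx0 _) (by omega)
  set B := ‖Z‖ + 2 with hBdef
  have hB1 : 1 ≤ B := by have := norm_nonneg Z; simp only [hBdef]; linarith
  have hB0 : 0 < B := lt_of_lt_of_le one_pos hB1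
  set K := (N : ℝ) * B ^ N with hKdef
  have hK0 : 0 < K := by
    have : (0:ℝ) < N := by exact_mod_cast Nat.pos_of_ne_zero (by omega)
    positivity
  set δ₀ := min 1 ((a ^ N - ‖Z ^ N‖) / K) with hδ₀def
  have hδ₀ : 0 < δ₀ := lt_min one_pos (div_pos (by linarith) hK0)
  set C := (max 1 (B / a)) ^ N with hCdef
  have ht1 : (1:ℝ) ≤ max 1 (B / a) := le_max_left _ _
  have hC1 : (1:ℝ) ≤ C := one_le_pow₀ ht1
  refine ⟨δ₀, hδ₀, C, hC1, ?_⟩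
  intro δ hδ hδle ℓ hℓ
  refine Real.sSup_le ?_ (by positivity)
  rintro c ⟨m, W, hm, hW, rfl⟩
  haveI : Nonempty (Fin (m * s)) := ⟨⟨0, Nat.mul_pos hm hs⟩⟩
  rw [cOpNorm_eq_norm] at hW ⊢
  set D := repDiag m Z with hDdef
  have hDnorm : ‖D‖ = ‖Z‖ := norm_repDiag hm Z
  have hWD : ‖W - D‖ < δ₀ := lt_of_lt_of_le hW hδle
  have hδ₀1 : δ₀ ≤ 1 := min_le_left _ _
  have hWle : ‖W‖ ≤ B := by
    have h1 : ‖W‖ ≤ ‖W - D‖ + ‖D‖ := by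
      calc ‖W‖ = ‖(W - D) + D‖ := by rw [sub_add_cancel]
      _ ≤ ‖W - D‖ + ‖D‖ := norm_add_le _ _
    rw [hDnorm] at h1
    simp only [hBdef]
    linarith
  have hDle : ‖D‖ ≤ B := by rw [hDnorm]; simp only [hBdef]; linarith [norm_nonneg Z]
  have hpert : ‖W ^ N - D ^ N‖ ≤ K * ‖W - D‖ :=
    norm_pow_sub_pow_le W D hWle hDle hB1 N
  have hDN : ‖D ^ N‖ = ‖Z ^ N‖ := by
    rw [hDdef, repDiag_pow, norm_repDiag hm]
  have hWN : ‖W ^ N‖ ≤ a ^ N := by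
    have h1 : ‖W ^ N‖ ≤ ‖D ^ N‖ + ‖W ^ N - D ^ N‖ := by
      calc ‖W ^ N‖ = ‖D ^ N + (W ^ N - D ^ N)‖ := by rw [add_sub_cancel]
      _ ≤ ‖D ^ N‖ + ‖W ^ N - D ^ N‖ := norm_add_le _ _
    have h2 : K * ‖W - D‖ ≤ K * δ₀ := mul_le_mul_of_nonneg_left hWD.le hK0.le
    have h3 : K * δ₀ ≤ a ^ N - ‖Z ^ N‖ := by
      have := min_le_right (1:ℝ) ((a ^ N - ‖Z ^ N‖) / K)
      calc K * δ₀ ≤ K * ((a ^ N - ‖Z ^ N‖) / K) :=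
        mul_le_mul_of_nonneg_left this hK0.le
      _ = a ^ N - ‖Z ^ N‖ := mul_div_cancel₀ _ hK0.ne'
    rw [hDN] at h1
    linarith
  set q := ℓ / N with hqdef
  set r := ℓ % N with hrdef
  have hℓeq : N * q + r = ℓ := Nat.div_add_mod ℓ N
  have hrN : r < N := Nat.mod_lt ℓ (by omega)
  have hWpow : ‖W ^ ℓ‖ ≤ (a ^ N) ^ q * B ^ r := by
    have hsplit : W ^ ℓ = (W ^ N) ^ q * W ^ r := by rw [← pow_mul, ← pow_add, hℓeq]
    rw [hsplit]
    calc ‖(W ^ N) ^ q * W ^ r‖ ≤ ‖(W ^ N) ^ q‖ * ‖W ^ r‖ := norm_mul_le _ _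
    _ ≤ ‖W ^ N‖ ^ q * ‖W‖ ^ r := by
        refine mul_le_mul (norm_pow_le _ _) (norm_pow_le _ _) (norm_nonneg _) ?_
        positivity
    _ ≤ (a ^ N) ^ q * B ^ r := by
        refine mul_le_mul (pow_le_pow_left₀ (norm_nonneg _) hWN q)
          (pow_le_pow_left₀ (norm_nonneg _) hWle r) (by positivity) (by positivity)
  refine le_trans hWpow ?_
  have hBr : B ^ r = (B / a) ^ r * a ^ r := by
    rw [div_pow, div_mul_cancel₀]
    positivity
  have h2 : (B / a) ^ r ≤ C := by
    calc (B / a) ^ r ≤ (max 1 (B / a)) ^ r :=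
      pow_le_pow_left₀ (by positivity) (le_max_right _ _) r
    _ ≤ (max 1 (B / a)) ^ N := pow_le_pow_right₀ ht1 hrN.le
  calc (a ^ N) ^ q * B ^ r = (B / a) ^ r * (a ^ (N * q) * a ^ r) := by
        rw [hBr, ← pow_mul]; ring
  _ = (B / a) ^ r * a ^ ℓ := by rw [← pow_add, hℓeq]
  _ ≤ C * a ^ ℓ := mul_le_mul_of_nonneg_right h2 (by positivity)

end Key
section Main
open Filter
open scoped Matrix.Norms.L2Operator Topology

variable {s : ℕ}

lemma rpow_pow_cancel {c : ℝ} (hc : 0 ≤ c) {ℓ : ℕ} (hℓ : ℓ ≠ 0) :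
    (c ^ ℓ) ^ (1 / (ℓ : ℝ)) = c := by
  rw [← Real.rpow_natCast c ℓ, ← Real.rpow_mul hc, mul_one_div, div_self
    (Nat.cast_ne_zero.mpr hℓ), Real.rpow_one]

lemma u_le_const (hs : 0 < s) (Z : Matrix (Fin s) (Fin s) ℂ) {δ : ℝ} (hδ : 0 < δ) (ℓ : ℕ) :
    Mval Z ℓ δ ^ (1 / (ℓ : ℝ)) ≤ max 1 (‖Z‖ + δ) := by
  set c := max 1 (‖Z‖ + δ) with hcdef
  have hc1 : (1:ℝ) ≤ c := le_max_left _ _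
  have hc0 : (0:ℝ) < c := lt_of_lt_of_le one_pos hc1
  rcases Nat.eq_zero_or_pos ℓ with h0 | h1
  · subst h0
    simp only [Nat.cast_zero, div_zero, Real.rpow_zero]
    exact hc1
  · have hM : Mval Z ℓ δ ≤ c ^ ℓ := by
      refine Real.sSup_le (fun x hx => le_trans (Mset_bddAbove hs Z ℓ hδ x hx) ?_)
        (by positivity)
      refine max_le (one_le_pow₀ hc1) (pow_le_pow_left₀ (by positivity) (le_max_right _ _) ℓ)
    calc Mval Z ℓ δ ^ (1 / (ℓ : ℝ)) ≤ (c ^ ℓ) ^ (1 / (ℓ : ℝ)) :=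
      Real.rpow_le_rpow (Mval_nonneg hs Z ℓ hδ) hM (by positivity)
    _ = c := rpow_pow_cancel hc0.le (by omega)

lemma liminf_lower (hs : 0 < s) (Z : Matrix (Fin s) (Fin s) ℂ) {δ : ℝ} (hδ : 0 < δ) :
    specRad Z ≤ liminf (fun ℓ : ℕ => Mval Z ℓ δ ^ (1 / (ℓ : ℝ))) atTop := by
  set u := fun ℓ : ℕ => Mval Z ℓ δ ^ (1 / (ℓ : ℝ)) with hudef
  set w := fun ℓ : ℕ => ‖Z ^ ℓ‖ ^ (1 / (ℓ : ℝ)) with hwdef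
  have hw : Tendsto w atTop (𝓝 (specRad Z)) := tendsto_norm_pow_rpow hs Z
  have hle : ∀ ℓ, w ℓ ≤ u ℓ := fun ℓ =>
    Real.rpow_le_rpow (norm_nonneg _) (norm_pow_le_Mval hs Z ℓ hδ) (by positivity)
  have h1 : liminf w atTop ≤ liminf u atTop := by
    refine liminf_le_liminf (Eventually.of_forall hle) hw.isBoundedUnder_ge ?_
    exact isCoboundedUnder_ge_of_le atTop (fun ℓ => u_le_const hs Z hδ ℓ)
  rwa [hw.liminf_eq] at h1

lemma key_bound (hs : 0 < s) (Z : Matrix (Fin s) (Fin s) ℂ) {ε : ℝ} (hε : 0 < ε) :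
    ∃ δ₀ > 0, ∀ δ : ℝ, 0 < δ → δ ≤ δ₀ →
      limsup (fun ℓ : ℕ => Mval Z ℓ δ ^ (1 / (ℓ : ℝ))) atTop ≤ specRad Z + ε ∧
      liminf (fun ℓ : ℕ => Mval Z ℓ δ ^ (1 / (ℓ : ℝ))) atTop ≤
        limsup (fun ℓ : ℕ => Mval Z ℓ δ ^ (1 / (ℓ : ℝ))) atTop := by
  have hρ0 : 0 ≤ specRad Z := specRad_nonneg hs Z
  obtain ⟨δ₀, hδ₀, C, hC1, hbound⟩ := Mval_upper hs Z (half_pos hε)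
  set a := specRad Z + ε / 2 with hadef
  have ha0 : 0 < a := by positivity
  refine ⟨δ₀, hδ₀, fun δ hδ hδle => ?_⟩
  set u := fun ℓ : ℕ => Mval Z ℓ δ ^ (1 / (ℓ : ℝ)) with hudef
  have hu0 : ∀ ℓ, 0 ≤ u ℓ := fun ℓ => Real.rpow_nonneg (Mval_nonneg hs Z ℓ hδ) _
  have hub : ∀ ℓ : ℕ, 1 ≤ ℓ → u ℓ ≤ C ^ (1 / (ℓ : ℝ)) * a := by
    intro ℓ hℓ
    have h1 : Mval Z ℓ δ ≤ C * a ^ ℓ := hbound δ hδ hδle ℓ hℓ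
    have h2 : u ℓ ≤ (C * a ^ ℓ) ^ (1 / (ℓ : ℝ)) :=
      Real.rpow_le_rpow (Mval_nonneg hs Z ℓ hδ) h1 (by positivity)
    rwa [Real.mul_rpow (by linarith) (by positivity),
      rpow_pow_cancel ha0.le (by omega)] at h2
  have hCt : Tendsto (fun ℓ : ℕ => C ^ (1 / (ℓ : ℝ)) * a) atTop (𝓝 a) := by
    have h := (tendsto_const_nhds (x := C) (f := atTop (α := ℕ))).rpow
      tendsto_one_div_atTop_nhds_zero_nat (Or.inl (by linarith))
    simpa [Real.rpow_zero] using h.mul_const a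
  have hev2 : ∀ᶠ ℓ : ℕ in atTop, C ^ (1 / (ℓ : ℝ)) * a ≤ a + ε / 2 :=
    (hCt.eventually_lt_const (by linarith)).mono fun ℓ h => h.le
  have hevle : ∀ᶠ ℓ : ℕ in atTop, u ℓ ≤ specRad Z + ε := by
    filter_upwards [eventually_ge_atTop 1, hev2] with ℓ h1 h2
    have h3 := hub ℓ h1
    have : a + ε / 2 = specRad Z + ε := by rw [hadef]; ring
    linarith
  have hcob : IsCoboundedUnder (· ≤ ·) atTop u :=
    isCoboundedUnder_le_of_le atTop (x := 0) hu0
  have hlimsup : limsup u atTop ≤ specRad Z + ε := limsup_le_of_le hcob hevle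
  have hbddle : IsBoundedUnder (· ≤ ·) atTop u := ⟨specRad Z + ε, by
    rwa [Filter.eventually_map]⟩
  have hbddge : IsBoundedUnder (· ≥ ·) atTop u := ⟨0, by
    rw [Filter.eventually_map]; exact Eventually.of_forall hu0⟩
  exact ⟨hlimsup, liminf_le_limsup hbddle hbddge⟩

end Main

theorem power_growth_rate_eq_spectral_radius
    {s : ℕ} (hs : 0 < s) (Z : Matrix (Fin s) (Fin s) ℂ) :
    Filter.Tendsto
        (fun δ : ℝ =>
          Filter.limsup (fun ℓ : ℕ => Mval Z ℓ δ ^ (1 / (ℓ : ℝ))) Filter.atTop)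
        (nhdsWithin 0 (Set.Ioi 0)) (nhds (specRad Z)) ∧
    Filter.Tendsto
        (fun δ : ℝ =>
          Filter.liminf (fun ℓ : ℕ => Mval Z ℓ δ ^ (1 / (ℓ : ℝ))) Filter.atTop)
        (nhdsWithin 0 (Set.Ioi 0)) (nhds (specRad Z)) ∧
    (∀ δ : ℝ, 0 < δ →
      specRad Z ≤ Filter.liminf (fun ℓ : ℕ => Mval Z ℓ δ ^ (1 / (ℓ : ℝ))) Filter.atTop) ∧
    ∀ ε : ℝ, 0 < ε → ∃ δ : ℝ, 0 < δ ∧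
      Filter.limsup (fun ℓ : ℕ => Mval Z ℓ δ ^ (1 / (ℓ : ℝ))) Filter.atTop ≤
        specRad Z + ε := by
  have hlow : ∀ δ : ℝ, 0 < δ →
      specRad Z ≤ Filter.liminf (fun ℓ : ℕ => Mval Z ℓ δ ^ (1 / (ℓ : ℝ))) Filter.atTop :=
    fun δ hδ => liminf_lower hs Z hδ
  refine ⟨?_, ?_, hlow, ?_⟩
  · rw [Metric.tendsto_nhdsWithin_nhds]
    intro ε hε
    obtain ⟨δ₀, hδ₀, hk⟩ := key_bound hs Z (half_pos hε)
    refine ⟨δ₀, hδ₀, fun {x} hx hdist => ?_⟩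
    have hx0 : 0 < x := hx
    have hxδ : x ≤ δ₀ := by
      rw [Real.dist_eq, sub_zero, abs_of_pos hx0] at hdist
      exact hdist.le
    obtain ⟨h1, h2⟩ := hk x hx0 hxδ
    have h3 := le_trans (hlow x hx0) h2
    rw [Real.dist_eq, abs_of_nonneg (by linarith)]
    linarith
  · rw [Metric.tendsto_nhdsWithin_nhds]
    intro ε hε
    obtain ⟨δ₀, hδ₀, hk⟩ := key_bound hs Z (half_pos hε)
    refine ⟨δ₀, hδ₀, fun {x} hx hdist => ?_⟩
    have hx0 : 0 < x := hx
    have hxδ : x ≤ δ₀ := by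
      rw [Real.dist_eq, sub_zero, abs_of_pos hx0] at hdist
      exact hdist.le
    obtain ⟨h1, h2⟩ := hk x hx0 hxδ
    have h3 := hlow x hx0
    have h4 := le_trans h2 h1
    rw [Real.dist_eq, abs_of_nonneg (by linarith)]
    linarith
  · intro ε hε
    obtain ⟨δ₀, hδ₀, hk⟩ := key_bound hs Z hε
    exact ⟨δ₀, hδ₀, (hk δ₀ hδ₀ le_rfl).1⟩
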